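/- (Tail estimate) Fix R > 0 and δ ∈ (0, μ−1). Then for all ξ ∈ ℝ, h > 0 and N ∈ ℕ: ∫_{{P₂ ≥ N·R²}} e^{−F_N^{(ξ)}(y)/(hN)} dy ≤ e^{−(ξ² + δ)·R²/(2h)}·Z_{h,N}(−δ), where Z_{h,N}(t) = ∫_{ℝ^{N−1}} e^{−(t·P₂(y) + Q(y))/(2hN)} dy. -/

import Mathlib

open Real Finset Matrix MeasureTheory

noncomputable section

/-- The normalized discrete Laplacian with periodic boundary conditions. -/
def Kd (μ : ℝ) (N : ℕ) (hN : N ≠ 0) (x : Fin N → ℝ) : Fin N → ℝ :=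
  haveI : NeZero N := ⟨hN⟩
  fun k => μ / (4 * Real.sin (π / N) ^ 2) * (2 * x k - x (k + 1) - x (k - 1))

/-- `Q(y) = ⟨Ay, K(Ay)⟩ − P₂(y)`. -/
def Q (μ : ℝ) (N : ℕ) (hN : N ≠ 0) (A : Matrix (Fin N) (Fin (N - 1)) ℝ)
    (y : Fin (N - 1) → ℝ) : ℝ :=
  (∑ k, A.mulVec y k * Kd μ N hN (A.mulVec y) k) - ∑ i, y i ^ 2

/-- `F_N^{(ξ)}(y) = (1/4)P₄(y) + ξP₃(y) + (3/2)ξ²P₂(y) + (1/2)Q(y)`. -/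
def F (μ : ℝ) (N : ℕ) (hN : N ≠ 0) (A : Matrix (Fin N) (Fin (N - 1)) ℝ) (ξ : ℝ)
    (y : Fin (N - 1) → ℝ) : ℝ :=
  (1 / 4 : ℝ) * ∑ k, A.mulVec y k ^ 4 + ξ * ∑ k, A.mulVec y k ^ 3
    + (3 / 2 : ℝ) * ξ ^ 2 * ∑ i, y i ^ 2 + (1 / 2 : ℝ) * Q μ N hN A y


lemma sin_step {N j : ℕ} (hN : 2 ≤ N) (h1 : 1 ≤ j) (h2 : 2 * j ≤ N) :
    Real.sin (π / N) ≤ Real.sin (π * j / N) := by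
  have hπ := Real.pi_pos
  have hN0 : (0:ℝ) < N := by positivity
  have h1' : (1:ℝ) ≤ (j:ℝ) := by exact_mod_cast h1
  have h2' : (2 * j : ℝ) ≤ N := by exact_mod_cast h2
  apply Real.strictMonoOn_sin.monotoneOn
  · constructor
    · have : (0:ℝ) ≤ π / N := by positivity
      linarith [Real.pi_div_two_pos]
    · rw [div_le_div_iff₀ hN0 (by norm_num : (0:ℝ) < 2)]
      have : (2:ℝ) ≤ N := by exact_mod_cast hN
      nlinarith
  · constructor
    · have : (0:ℝ) ≤ π * j / N := by positivity
      linarith [Real.pi_div_two_pos]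
    · rw [div_le_div_iff₀ hN0 (by norm_num : (0:ℝ) < 2)]
      nlinarith
  · rw [div_le_div_iff₀ hN0 hN0]
    nlinarith [mul_nonneg (mul_nonneg hπ.le (sub_nonneg.mpr h1')) hN0.le]

lemma sin_low {N j : ℕ} (hN : 2 ≤ N) (h1 : 1 ≤ j) (h2 : j ≤ N - 1) :
    Real.sin (π / N) ≤ Real.sin (π * j / N) := by
  have hN0 : (0:ℝ) < N := by positivity
  by_cases hc : 2 * j ≤ N
  · exact sin_step hN h1 hc
  · have hcast : ((N - j : ℕ) : ℝ) = (N:ℝ) - j := by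
      rw [Nat.cast_sub (by omega : j ≤ N)]
    have hj2 : Real.sin (π * j / N) = Real.sin (π * ((N - j : ℕ) : ℝ) / N) := by
      rw [hcast, ← Real.sin_pi_sub]
      congr 1
      field_simp
    rw [hj2]
    exact sin_step hN (by omega) (by omega)
lemma pow_mod_eq {ζ : ℂ} {N : ℕ} (hζ : ζ ^ N = 1) (a : ℕ) : ζ ^ a = ζ ^ (a % N) := by
  conv_lhs => rw [← Nat.div_add_mod a N]
  rw [pow_add, pow_mul, hζ, one_pow, one_mul]

lemma poincare (N : ℕ) [NeZero N] (hN : 2 ≤ N) (x : Fin N → ℝ) (hx : ∑ k, x k = 0) :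
    4 * Real.sin (π / N) ^ 2 * ∑ k, x k ^ 2 ≤ ∑ k : Fin N, (x (k + 1) - x k) ^ 2 := by
  have hN0 : (N : ℕ) ≠ 0 := by omega
  set ζ := Complex.exp (2 * π * Complex.I / N) with hζdef
  have hprim : IsPrimitiveRoot ζ N := Complex.isPrimitiveRoot_exp N hN0
  have hζN : ζ ^ N = 1 := hprim.pow_eq_one
  have hζne : ζ ≠ 0 := Complex.exp_ne_zero _
  have hconj : (starRingEnd ℂ) ζ = ζ⁻¹ := by
    rw [hζdef, ← Complex.exp_conj, ← Complex.exp_neg]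
    congr 1
    simp only [map_div₀, _root_.map_mul, Complex.conj_I, Complex.conj_ofReal, _root_.map_ofNat, _root_.map_natCast]
    ring
  -- orthogonality
  have orth : ∀ k l : Fin N, ∑ j : Fin N, ζ ^ ((j : ℕ) * k) *
      (starRingEnd ℂ) (ζ ^ ((j : ℕ) * l)) = if k = l then (N : ℂ) else 0 := by
    intro k l
    have hterm : ∀ j : Fin N, ζ ^ ((j : ℕ) * k) * (starRingEnd ℂ) (ζ ^ ((j : ℕ) * l))
        = (ζ ^ (k : ℕ) * (ζ⁻¹) ^ (l : ℕ)) ^ (j : ℕ) := by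
      intro j
      rw [_root_.map_pow, hconj, mul_pow, ← pow_mul, ← pow_mul, mul_comm (k : ℕ), mul_comm (l : ℕ)]
    simp_rw [hterm]
    rw [Fin.sum_univ_eq_sum_range (fun j => (ζ ^ (k : ℕ) * (ζ⁻¹) ^ (l : ℕ)) ^ j)]
    by_cases hkl : k = l
    · subst hkl
      simp_rw [inv_pow, mul_inv_cancel₀ (pow_ne_zero (k:ℕ) hζne), one_pow]
      simp
    · have hw1 : ζ ^ (k : ℕ) * (ζ⁻¹) ^ (l : ℕ) ≠ 1 := by
        intro h
        apply hkl
        have : ζ ^ (k : ℕ) = ζ ^ (l : ℕ) := by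
          field_simp at h
          have h' : ζ ^ (k : ℕ) * (ζ ^ (l : ℕ))⁻¹ = 1 := by simpa [inv_pow] using h
          exact (mul_inv_eq_one₀ (pow_ne_zero _ hζne)).mp h'
        exact Fin.ext (hprim.pow_inj k.isLt l.isLt this)
      rw [geom_sum_eq hw1]
      have : (ζ ^ (k : ℕ) * (ζ⁻¹) ^ (l : ℕ)) ^ N = 1 := by
        rw [mul_pow, ← pow_mul, ← pow_mul, mul_comm (k:ℕ), mul_comm (l:ℕ), pow_mul, pow_mul,
          hζN, inv_pow, hζN]
        simp
      rw [this]
      simp [hkl]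
  -- Parseval
  have pars : ∀ v : Fin N → ℝ,
      ∑ j : Fin N, Complex.normSq (∑ k, (v k : ℂ) * ζ ^ ((j : ℕ) * (k : ℕ)))
        = N * ∑ k, v k ^ 2 := by
    intro v
    have key : ((∑ j : Fin N, Complex.normSq (∑ k, (v k : ℂ) * ζ ^ ((j : ℕ) * (k : ℕ)))) : ℂ)
        = ((N * ∑ k, v k ^ 2 : ℝ) : ℂ) := by
      push_cast
      have expand : ∀ j : Fin N,
          ((Complex.normSq (∑ k, (v k : ℂ) * ζ ^ ((j : ℕ) * (k : ℕ)))) : ℂ)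
          = ∑ k, ∑ l, ((v k : ℂ) * v l) * (ζ ^ ((j:ℕ) * k) * (starRingEnd ℂ) (ζ ^ ((j:ℕ) * l))) := by
        intro j
        rw [← Complex.mul_conj, _root_.map_sum, Finset.sum_mul_sum]
        apply Finset.sum_congr rfl; intro k _
        apply Finset.sum_congr rfl; intro l _
        simp only [_root_.map_mul, Complex.conj_ofReal]
        ring
      calc (∑ j : Fin N, ((Complex.normSq (∑ k, (v k : ℂ) * ζ ^ ((j : ℕ) * (k : ℕ)))) : ℂ))
          = ∑ j : Fin N, ∑ k, ∑ l, ((v k : ℂ) * v l) *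
              (ζ ^ ((j:ℕ) * k) * (starRingEnd ℂ) (ζ ^ ((j:ℕ) * l))) :=
            Finset.sum_congr rfl (fun j _ => expand j)
        _ = ∑ k, ∑ l, ((v k : ℂ) * v l) *
              ∑ j : Fin N, (ζ ^ ((j:ℕ) * k) * (starRingEnd ℂ) (ζ ^ ((j:ℕ) * l))) := by
            rw [Finset.sum_comm]
            apply Finset.sum_congr rfl; intro k _
            rw [Finset.sum_comm]
            apply Finset.sum_congr rfl; intro l _
            rw [Finset.mul_sum]
        _ = ∑ k, ∑ l, ((v k : ℂ) * v l) * (if k = l then (N : ℂ) else 0) := by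
            apply Finset.sum_congr rfl; intro k _
            apply Finset.sum_congr rfl; intro l _
            rw [orth k l]
        _ = ∑ k : Fin N, ((v k : ℂ) * v k) * N := by
            apply Finset.sum_congr rfl; intro k _
            simp only [mul_ite, mul_zero, Finset.sum_ite_eq, Finset.mem_univ, if_true]
        _ = (N : ℂ) * ∑ k, (v k : ℂ) ^ 2 := by
            rw [Finset.mul_sum]
            apply Finset.sum_congr rfl; intro k _; ring
      -- done
    exact_mod_cast key
  set xh : Fin N → ℂ := fun j => ∑ k, (x k : ℂ) * ζ ^ ((j : ℕ) * (k : ℕ)) with hxh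
  have hmodpow : ∀ a b : ℕ, a % N = b % N → ζ ^ a = ζ ^ b := by
    intro a b hab; rw [pow_mod_eq hζN a, pow_mod_eq hζN b, hab]
  -- shift identity
  have shift : ∀ j : Fin N, (∑ k : Fin N, ((x (k + 1) - x k : ℝ) : ℂ) * ζ ^ ((j : ℕ) * (k : ℕ)))
      = (ζ ^ ((j : ℕ) * (N - 1)) - 1) * xh j := by
    intro j
    have h1 : ∑ k : Fin N, ((x (k + 1) : ℝ) : ℂ) * ζ ^ ((j : ℕ) * (k : ℕ))
        = ζ ^ ((j : ℕ) * (N - 1)) * xh j := by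
      have e1 : ∀ k : Fin N, ((x (k + 1) : ℝ) : ℂ) * ζ ^ ((j : ℕ) * (k : ℕ))
          = ((x (k + 1) : ℝ) : ℂ) * ζ ^ ((j : ℕ) * (((k + 1 : Fin N) : ℕ) + (N - 1))) := by
        intro k
        congr 1
        apply hmodpow
        have hv1 : ((1 : Fin N) : ℕ) = 1 := by
          simp [Fin.val_one]
          exact Nat.mod_eq_of_lt (by omega)
        have hadd : ((k + 1 : Fin N) : ℕ) = ((k : ℕ) + 1) % N := by
          rw [Fin.add_def, hv1]
        have hk := k.isLt
        by_cases hc : (k : ℕ) + 1 < N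
        · have hval : ((k + 1 : Fin N) : ℕ) = (k : ℕ) + 1 := by
            rw [hadd, Nat.mod_eq_of_lt hc]
          rw [hval]
          have he : (j : ℕ) * ((k : ℕ) + 1 + (N - 1)) = (j : ℕ) * (k : ℕ) + (j : ℕ) * N := by
            have h9 : (k : ℕ) + 1 + (N - 1) = (k : ℕ) + N := by omega
            rw [h9]; ring
          rw [he, Nat.add_mul_mod_self_right]
        · have hkN : (k : ℕ) = N - 1 := by omega
          have hz : ((k + 1 : Fin N) : ℕ) = 0 := by
            rw [hadd, show (k : ℕ) + 1 = N by omega, Nat.mod_self]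
          rw [hz, hkN]
          simp
      rw [Finset.sum_congr rfl (fun k _ => e1 k)]
      rw [Fintype.sum_equiv (Equiv.addRight (1 : Fin N))
        (fun k : Fin N => ((x (k + 1) : ℝ) : ℂ) * ζ ^ ((j : ℕ) * (((k + 1 : Fin N) : ℕ) + (N - 1))))
        (fun m : Fin N => ((x m : ℝ) : ℂ) * ζ ^ ((j : ℕ) * ((m : ℕ) + (N - 1))))
        (fun k => rfl)]
      simp_rw [Nat.mul_add, pow_add]
      rw [hxh]
      rw [Finset.mul_sum]
      apply Finset.sum_congr rfl; intro m _; ring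
    simp_rw [Complex.ofReal_sub, sub_mul, Finset.sum_sub_distrib, h1]
    rw [hxh]
    ring
  -- normSq factor
  have hfac : ∀ j : Fin N, Complex.normSq (ζ ^ ((j : ℕ) * (N - 1)) - 1)
      = 4 * Real.sin (π * j / N) ^ 2 := by
    intro j
    have hmul : ζ ^ ((j : ℕ) * (N - 1)) * ζ ^ (j : ℕ) = 1 := by
      rw [← pow_add, show (j : ℕ) * (N - 1) + (j : ℕ) = (j : ℕ) * ((N - 1) + 1) by ring,
        show (N - 1) + 1 = N by omega, mul_comm (j : ℕ) N, pow_mul, hζN, one_pow]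
    have hinv : ζ ^ ((j : ℕ) * (N - 1)) = (starRingEnd ℂ) (ζ ^ (j : ℕ)) := by
      rw [_root_.map_pow, hconj, inv_pow]
      exact eq_inv_of_mul_eq_one_left hmul
    rw [hinv, show (starRingEnd ℂ) (ζ ^ (j : ℕ)) - 1 = (starRingEnd ℂ) (ζ ^ (j : ℕ) - 1) by
      rw [_root_.map_sub, _root_.map_one], Complex.normSq_conj]
    have hexp : ζ ^ (j : ℕ) = Complex.exp (((2 * π * j / N : ℝ) : ℂ) * Complex.I) := by
      rw [hζdef, ← Complex.exp_nat_mul]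
      congr 1
      push_cast
      have : (N : ℂ) ≠ 0 := by exact_mod_cast (Nat.cast_ne_zero.mpr hN0)
      field_simp
    rw [hexp, Complex.exp_mul_I]
    rw [show Complex.cos ((2 * π * j / N : ℝ) : ℂ) = ((Real.cos (2 * π * j / N) : ℝ) : ℂ) from
        (Complex.ofReal_cos _).symm,
      show Complex.sin ((2 * π * j / N : ℝ) : ℂ) = ((Real.sin (2 * π * j / N) : ℝ) : ℂ) from
        (Complex.ofReal_sin _).symm]
    set θ : ℝ := 2 * π * j / N with hθ
    have hre : ((Real.cos θ : ℝ) : ℂ) + ((Real.sin θ : ℝ) : ℂ) * Complex.I - 1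
        = Complex.mk (Real.cos θ - 1) (Real.sin θ) := by
      apply Complex.ext <;> simp [Complex.cos_ofReal_re, Complex.sin_ofReal_re]
    rw [hre, Complex.normSq_mk]
    have hhalf : π * j / N = θ / 2 := by rw [hθ]; ring
    rw [hhalf]
    have hc : Real.cos (θ / 2) ^ 2 = 1 / 2 + Real.cos θ / 2 := by
      have h0 := Real.cos_sq (θ / 2)
      rwa [show 2 * (θ / 2) = θ by ring] at h0
    nlinarith [Real.sin_sq_add_cos_sq θ, Real.sin_sq_add_cos_sq (θ / 2), hc]
  -- x̂ 0 = 0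
  have hx0 : xh 0 = 0 := by
    rw [hxh]
    simp only [Fin.val_zero, Nat.zero_mul, pow_zero, mul_one]
    rw [← Complex.ofReal_sum]
    rw [hx]
    simp
  -- assembly
  have hd := pars (fun k => x (k + 1) - x k)
  simp_rw [shift] at hd
  have hstep : ∀ j : Fin N, 4 * Real.sin (π / N) ^ 2 * Complex.normSq (xh j)
      ≤ Complex.normSq ((ζ ^ ((j : ℕ) * (N - 1)) - 1) * xh j) := by
    intro j
    rw [Complex.normSq_mul, hfac j]
    by_cases hj : j = 0
    · rw [hj, hx0]
      simp
    · have hj1 : 1 ≤ (j : ℕ) := by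
        rcases Nat.eq_zero_or_pos (j : ℕ) with h | h
        · exact absurd (Fin.ext h) hj
        · exact h
      have hj2 : (j : ℕ) ≤ N - 1 := by have := j.isLt; omega
      have hs := sin_low hN hj1 hj2
      have hsnn : 0 ≤ Real.sin (π / N) := by
        apply Real.sin_nonneg_of_nonneg_of_le_pi
        · positivity
        · rw [div_le_iff₀ (by positivity : (0:ℝ) < (N:ℝ))]
          nlinarith [Real.pi_pos, show (2:ℝ) ≤ (N:ℝ) by exact_mod_cast hN]
      have : Real.sin (π / N) ^ 2 ≤ Real.sin (π * j / N) ^ 2 := by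
        apply pow_le_pow_left₀ hsnn hs
      nlinarith [Complex.normSq_nonneg (xh j)]
  have hsum : 4 * Real.sin (π / N) ^ 2 * ((N : ℝ) * ∑ k, x k ^ 2)
      ≤ (N : ℝ) * ∑ k : Fin N, (x (k + 1) - x k) ^ 2 := by
    rw [← pars x, ← hd]
    rw [Finset.mul_sum]
    exact Finset.sum_le_sum fun j _ => hstep j
  have hNpos : (0:ℝ) < (N : ℝ) := by positivity
  have := (mul_le_mul_iff_right₀ hNpos).mpr (le_refl (∑ k : Fin N, (x (k + 1) - x k) ^ 2))
  rw [← mul_le_mul_iff_right₀ hNpos]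
  calc (N : ℝ) * (4 * Real.sin (π / N) ^ 2 * ∑ k, x k ^ 2)
      = 4 * Real.sin (π / N) ^ 2 * ((N : ℝ) * ∑ k, x k ^ 2) := by ring
    _ ≤ (N : ℝ) * ∑ k : Fin N, (x (k + 1) - x k) ^ 2 := hsum


lemma quad_form {N : ℕ} [NeZero N] (v : Fin N → ℝ) :
    ∑ k, v k * (2 * v k - v (k + 1) - v (k - 1)) = ∑ k : Fin N, (v (k + 1) - v k) ^ 2 := by
  have h1 : ∑ k : Fin N, v (k + 1) * v k = ∑ k, v k * v (k - 1) := by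
    apply Fintype.sum_equiv (Equiv.addRight (1 : Fin N))
    intro k
    simp
  have h2 : ∑ k : Fin N, v (k + 1) ^ 2 = ∑ k, v k ^ 2 := by
    apply Fintype.sum_equiv (Equiv.addRight (1 : Fin N))
    intro k
    simp
  have e1 : ∑ k, v k * (2 * v k - v (k + 1) - v (k - 1))
      = 2 * ∑ k, v k ^ 2 - ∑ k, v (k + 1) * v k - ∑ k, v k * v (k - 1) := by
    rw [Finset.mul_sum, ← Finset.sum_sub_distrib, ← Finset.sum_sub_distrib]
    apply Finset.sum_congr rfl; intros; ring
  have e2 : ∑ k : Fin N, (v (k + 1) - v k) ^ 2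
      = ∑ k : Fin N, v (k + 1) ^ 2 - 2 * ∑ k : Fin N, v (k + 1) * v k + ∑ k, v k ^ 2 := by
    rw [Finset.mul_sum, ← Finset.sum_sub_distrib, ← Finset.sum_add_distrib]
    apply Finset.sum_congr rfl; intros; ring
  rw [e1, e2, h2, ← h1]
  ring

lemma mulvec_norm {N M : ℕ} (A : Matrix (Fin N) (Fin M) ℝ) (hA : Aᵀ * A = 1)
    (y : Fin M → ℝ) : ∑ k, A.mulVec y k ^ 2 = ∑ i, y i ^ 2 := by
  have h1 : ∑ k, A.mulVec y k ^ 2 = A.mulVec y ⬝ᵥ A.mulVec y := by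
    simp [dotProduct, sq]
  have h2 : ∑ i, y i ^ 2 = y ⬝ᵥ y := by simp [dotProduct, sq]
  rw [h1, h2, Matrix.dotProduct_mulVec, ← Matrix.vecMul_transpose, Matrix.vecMul_vecMul, hA, Matrix.vecMul_one]

lemma Q_bound (μ : ℝ) (hμ : 1 < μ) (N : ℕ) (hN2 : 2 ≤ N) (hN : N ≠ 0)
    (A : Matrix (Fin N) (Fin (N - 1)) ℝ) (hA : Aᵀ * A = 1)
    (hmean : ∀ y : Fin (N - 1) → ℝ, ∑ k, A.mulVec y k = 0) (y : Fin (N - 1) → ℝ) :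
    (μ - 1) * ∑ i, y i ^ 2 ≤ Q μ N hN A y := by
  haveI : NeZero N := ⟨hN⟩
  set v := A.mulVec y with hv
  have hNR : (2:ℝ) ≤ (N:ℝ) := by exact_mod_cast hN2
  have hπ := Real.pi_pos
  have hsin : 0 < Real.sin (π / N) := by
    apply Real.sin_pos_of_pos_of_lt_pi
    · positivity
    · rw [div_lt_iff₀ (by positivity : (0:ℝ) < (N:ℝ))]
      nlinarith
  have hKd : ∑ k, v k * Kd μ N hN v k
      = μ / (4 * Real.sin (π / N) ^ 2) * ∑ k : Fin N, (v (k + 1) - v k) ^ 2 := by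
    unfold Kd
    rw [← quad_form v, Finset.mul_sum]
    apply Finset.sum_congr rfl; intros; ring
  have hpoin := poincare N hN2 v (hmean y)
  have hμ0 : (0:ℝ) < μ := by linarith
  have hc : 0 ≤ μ / (4 * Real.sin (π / N) ^ 2) := by positivity
  have hmain : μ * ∑ k, v k ^ 2 ≤ ∑ k, v k * Kd μ N hN v k := by
    rw [hKd]
    have := mul_le_mul_of_nonneg_left hpoin hc
    calc μ * ∑ k, v k ^ 2
        = μ / (4 * Real.sin (π / N) ^ 2) * (4 * Real.sin (π / N) ^ 2 * ∑ k, v k ^ 2) := by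
          field_simp
        _ ≤ _ := this
  have hnorm : ∑ k, v k ^ 2 = ∑ i, y i ^ 2 := mulvec_norm A hA y
  unfold Q
  rw [← hv]
  rw [hnorm] at hmain
  linarith

/-- Tail estimate: for `0 < δ < μ − 1` and `R > 0`,
`∫_{P₂ ≥ NR²} e^{−F_N^{(ξ)}/(hN)} dy ≤ e^{−(ξ²+δ)R²/(2h)} Z_{h,N}(−δ)`. -/
theorem stmt_13 (μ : ℝ) (hμ : 1 < μ) (R δ : ℝ) (hR : 0 < R) (hδ : 0 < δ) (hδμ : δ < μ - 1) :
    ∀ N : ℕ, ∀ hN : 2 ≤ N,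
      ∀ A : Matrix (Fin N) (Fin (N - 1)) ℝ, Aᵀ * A = 1 →
      (∀ y : Fin (N - 1) → ℝ, ∑ k, A.mulVec y k = 0) →
      ∀ ξ : ℝ, ∀ h : ℝ, 0 < h →
        (∫ y in {y : Fin (N - 1) → ℝ | N * R ^ 2 ≤ ∑ i, y i ^ 2},
            Real.exp (-(F μ N (by omega) A ξ y) / (h * N)))
          ≤ Real.exp (-((ξ ^ 2 + δ) * R ^ 2) / (2 * h)) *
            ∫ y : Fin (N - 1) → ℝ,
              Real.exp (-((-δ) * ∑ i, y i ^ 2 + Q μ N (by omega) A y) / (2 * h * N)) := by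
  intro N hN2 A hA hmean ξ h hh
  haveI : NeZero N := ⟨by omega⟩
  have hN : N ≠ 0 := by omega
  have hNpos : (0:ℝ) < (N:ℝ) := by positivity
  set c : ℝ := Real.exp (-((ξ ^ 2 + δ) * R ^ 2) / (2 * h)) with hcdef
  set g : (Fin (N - 1) → ℝ) → ℝ :=
    fun y => Real.exp (-((-δ) * ∑ i, y i ^ 2 + Q μ N hN A y) / (2 * h * N)) with hgdef
  set f : (Fin (N - 1) → ℝ) → ℝ :=
    fun y => Real.exp (-(F μ N hN A ξ y) / (h * N)) with hfdef
  set S : Set (Fin (N - 1) → ℝ) := {y | (N:ℝ) * R ^ 2 ≤ ∑ i, y i ^ 2} with hSdef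
  -- continuity
  have hmvc : ∀ k, Continuous fun y : Fin (N - 1) → ℝ => A.mulVec y k := by
    intro k
    simp only [Matrix.mulVec, dotProduct]
    exact continuous_finset_sum _ fun i _ => continuous_const.mul (continuous_apply i)
  have hP2c : Continuous fun y : Fin (N - 1) → ℝ => ∑ i, y i ^ 2 :=
    continuous_finset_sum _ fun i _ => (continuous_apply i).pow 2
  have hQc : Continuous fun y : Fin (N - 1) → ℝ => Q μ N hN A y := by
    unfold Q Kd
    apply Continuous.sub
    · apply continuous_finset_sum
      intro k _
      exact (hmvc k).mul (continuous_const.mul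
        (((continuous_const.mul (hmvc k)).sub (hmvc (k + 1))).sub (hmvc (k - 1))))
    · exact hP2c
  have hgc : Continuous g := by
    apply Real.continuous_exp.comp
    apply Continuous.div_const
    exact ((continuous_const.mul hP2c).add hQc).neg
  -- integrability of g
  have hε : (0:ℝ) < μ - 1 - δ := by linarith
  have hb : (0:ℝ) < (μ - 1 - δ) / (2 * h * N) := by positivity
  have hdom : Integrable (fun y : Fin (N - 1) → ℝ =>
      ∏ i, Real.exp (-((μ - 1 - δ) / (2 * h * N)) * (y i) ^ 2)) :=
    Integrable.fintype_prod fun _ => integrable_exp_neg_mul_sq hb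
  have hgle : ∀ y : Fin (N - 1) → ℝ,
      g y ≤ ∏ i, Real.exp (-((μ - 1 - δ) / (2 * h * N)) * (y i) ^ 2) := by
    intro y
    rw [← Real.exp_sum]
    apply Real.exp_le_exp.mpr
    have hQb := Q_bound μ hμ N hN2 hN A hA hmean y
    have hsum : ∑ i, -((μ - 1 - δ) / (2 * h * N)) * (y i) ^ 2
        = -((μ - 1 - δ) / (2 * h * N)) * ∑ i, (y i) ^ 2 := by
      rw [Finset.mul_sum]
    rw [hsum]
    have e3 : -((μ - 1 - δ) / (2 * h * N)) * ∑ i, (y i) ^ 2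
        = (-((μ - 1 - δ) * ∑ i, (y i) ^ 2)) / (2 * h * N) := by ring
    rw [e3]
    apply div_le_div_of_nonneg_right ?_ (by positivity)
    linarith
  have hgint : Integrable g := by
    apply hdom.mono' hgc.aestronglyMeasurable
    apply ae_of_all
    intro y
    rw [Real.norm_eq_abs, abs_of_pos (Real.exp_pos _)]
    exact hgle y
  -- pointwise bound on S
  have hpt : ∀ y : Fin (N - 1) → ℝ, y ∈ S → f y ≤ c * g y := by
    intro y hy
    have hT : (N:ℝ) * R ^ 2 ≤ ∑ i, y i ^ 2 := hy
    rw [hcdef, hgdef, ← Real.exp_add]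
    apply Real.exp_le_exp.mpr
    -- lower bound on F
    have hnorm := mulvec_norm A hA y
    have hexp2 : ∑ k, ((A.mulVec y k) ^ 2 / 2 + ξ * A.mulVec y k) ^ 2
        = (1 / 4) * ∑ k, A.mulVec y k ^ 4 + ξ * ∑ k, A.mulVec y k ^ 3
          + ξ ^ 2 * ∑ k, A.mulVec y k ^ 2 := by
      rw [Finset.mul_sum, Finset.mul_sum, Finset.mul_sum, ← Finset.sum_add_distrib,
        ← Finset.sum_add_distrib]
      apply Finset.sum_congr rfl; intros; ring
    have hsq : (0:ℝ) ≤ ∑ k, ((A.mulVec y k) ^ 2 / 2 + ξ * A.mulVec y k) ^ 2 :=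
      Finset.sum_nonneg fun k _ => sq_nonneg _
    have hlow : ξ ^ 2 * ∑ i, y i ^ 2 + Q μ N hN A y ≤ 2 * F μ N hN A ξ y := by
      unfold F
      nlinarith [hsq, hexp2, hnorm]
    -- combine fractions
    have e1 : -(F μ N hN A ξ y) / (h * ↑N) = (2 * (-(F μ N hN A ξ y))) / (2 * h * ↑N) := by
      rw [show (2:ℝ) * h * ↑N = 2 * (h * ↑N) by ring, mul_div_mul_left _ _ (two_ne_zero)]
    have e2 : -((ξ ^ 2 + δ) * R ^ 2) / (2 * h)
        = (-((ξ ^ 2 + δ) * R ^ 2) * ↑N) / (2 * h * ↑N) := by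
      rw [mul_div_mul_right _ _ (ne_of_gt hNpos)]
    rw [e1, e2, ← add_div]
    apply div_le_div_of_nonneg_right ?_ (by positivity)
    nlinarith [hlow, mul_nonneg (by positivity : (0:ℝ) ≤ ξ ^ 2 + δ) (sub_nonneg.mpr hT)]
  -- measurability of S
  have hS : MeasurableSet S :=
    measurableSet_le measurable_const hP2c.measurable
  -- chain of inequalities
  have step1 : (∫ y in S, f y) ≤ ∫ y in S, c * g y := by
    apply integral_mono_of_nonneg
    · exact ae_of_all _ fun y => le_of_lt (Real.exp_pos _)
    · exact ((hgint.const_mul c)).restrict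
    · exact (ae_restrict_iff' hS).mpr (ae_of_all _ hpt)
  have step2 : (∫ y in S, c * g y) = c * ∫ y in S, g y := integral_const_mul c g
  have step3 : (∫ y in S, g y) ≤ ∫ y, g y :=
    setIntegral_le_integral hgint (ae_of_all _ fun y => le_of_lt (Real.exp_pos _))
  calc (∫ y in S, f y) ≤ ∫ y in S, c * g y := step1
    _ = c * ∫ y in S, g y := step2
    _ ≤ c * ∫ y, g y := by
        apply mul_le_mul_of_nonneg_left step3 (le_of_lt (Real.exp_pos _))
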